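/- Suppose a coin system C = (1, c_2, ..., c_n) is not orderly, and let w be its smallest counterexample. If the greedy solution for w uses x_i coins of value c_i and some optimal solution for w uses y_i coins of value c_i, then x_i·y_i = 0 for every i. -/

import Mathlib

/-- The largest coin value in `C` that is at most `v` (or 0 if none). -/
def coinMax (C : List ℕ) (v : ℕ) : ℕ := (C.filter (· ≤ v)).foldr max 0

/-- Fuelled greedy coin count. -/
def grdAux (C : List ℕ) : ℕ → ℕ → ℕ
  | 0, _ => 0
  | fuel + 1, v =>
    let c := coinMax C v
    if v = 0 ∨ c = 0 then 0 else 1 + grdAux C fuel (v - c)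

/-- Number of coins used by the greedy algorithm to represent `v` with coin system `C`. -/
def grd (C : List ℕ) (v : ℕ) : ℕ := grdAux C v v

/-- The set of sizes of representations of `v` as nonnegative integer combinations of
the coin values in `C`. -/
def reprCosts (C : List ℕ) (v : ℕ) : Set ℕ :=
  {k | ∃ x : List ℕ, x.length = C.length ∧ (List.zipWith (· * ·) x C).sum = v ∧ x.sum = k}

/-- Minimum number of coins needed to represent `v` with coin system `C`. -/
noncomputable def opt (C : List ℕ) (v : ℕ) : ℕ := sInf (reprCosts C v)

/-- A coin system is orderly if greedy is optimal for every positive value. -/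
def Orderly (C : List ℕ) : Prop := ∀ v : ℕ, 0 < v → grd C v = opt C v

/-- Fuelled greedy: the list of coins taken by the greedy algorithm. -/
def grdCoinsAux (C : List ℕ) : ℕ → ℕ → List ℕ
  | 0, _ => []
  | fuel + 1, v =>
    let c := coinMax C v
    if v = 0 ∨ c = 0 then [] else c :: grdCoinsAux C fuel (v - c)

/-- The list of coins taken by the greedy algorithm for value `v`. -/
def grdCoins (C : List ℕ) (v : ℕ) : List ℕ := grdCoinsAux C v v

lemma foldr_max_zero_or_mem (l : List ℕ) : l.foldr max 0 = 0 ∨ l.foldr max 0 ∈ l := by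
  induction l with
  | nil => left; rfl
  | cons a t ih =>
    simp only [List.foldr_cons]
    rcases Nat.le_total a (t.foldr max 0) with h | h
    · rw [max_eq_right h]
      rcases ih with h0 | hm
      · left; exact h0
      · right; exact List.mem_cons_of_mem _ hm
    · rw [max_eq_left h]; right; exact List.mem_cons_self

lemma le_foldr_max {l : List ℕ} {a : ℕ} (h : a ∈ l) : a ≤ l.foldr max 0 := by
  induction l with
  | nil => cases h
  | cons b t ih =>
    simp only [List.foldr_cons]
    rcases List.mem_cons.1 h with rfl | hm
    · exact le_max_left _ _
    · exact le_trans (ih hm) (le_max_right _ _)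

lemma coinMax_le (C : List ℕ) (v : ℕ) : coinMax C v ≤ v := by
  rcases foldr_max_zero_or_mem (C.filter (· ≤ v)) with h | h
  · rw [coinMax, h]; exact Nat.zero_le _
  · have := List.of_mem_filter h
    simpa [coinMax] using this

lemma coinMax_mem {C : List ℕ} {v : ℕ} (h : coinMax C v ≠ 0) : coinMax C v ∈ C := by
  rcases foldr_max_zero_or_mem (C.filter (· ≤ v)) with h0 | hm
  · exact absurd h0 h
  · exact List.mem_of_mem_filter hm

lemma le_coinMax {C : List ℕ} {v c : ℕ} (hc : c ∈ C) (hle : c ≤ v) : c ≤ coinMax C v :=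
  le_foldr_max (List.mem_filter.2 ⟨hc, by simpa using hle⟩)

lemma coinMax_mono {C : List ℕ} {v v' : ℕ} (h : v ≤ v') : coinMax C v ≤ coinMax C v' := by
  by_cases h0 : coinMax C v = 0
  · rw [h0]; exact Nat.zero_le _
  · exact le_coinMax (coinMax_mem h0) (le_trans (coinMax_le C v) h)

lemma grdCoinsAux_fuel (C : List ℕ) :
    ∀ f1 f2 v, v ≤ f1 → v ≤ f2 → grdCoinsAux C f1 v = grdCoinsAux C f2 v := by
  intro f1
  induction f1 with
  | zero =>
    intro f2 v h1 h2
    have hv : v = 0 := Nat.le_zero.1 h1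
    subst hv
    cases f2 with
    | zero => rfl
    | succ f2 => simp [grdCoinsAux]
  | succ f1 ih =>
    intro f2 v h1 h2
    cases f2 with
    | zero =>
      have hv : v = 0 := Nat.le_zero.1 h2
      subst hv; simp [grdCoinsAux]
    | succ f2 =>
      simp only [grdCoinsAux]
      by_cases h : v = 0 ∨ coinMax C v = 0
      · simp [h]
      · push_neg at h
        simp only [if_neg (by tauto : ¬ (v = 0 ∨ coinMax C v = 0))]
        have hc : 1 ≤ coinMax C v := Nat.one_le_iff_ne_zero.2 h.2
        congr 1
        exact ih f2 (v - coinMax C v) (by omega) (by omega)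

lemma grdAux_eq_length (C : List ℕ) :
    ∀ f v, grdAux C f v = (grdCoinsAux C f v).length := by
  intro f
  induction f with
  | zero => intro v; rfl
  | succ f ih =>
    intro v
    simp only [grdAux, grdCoinsAux]
    by_cases h : v = 0 ∨ coinMax C v = 0
    · simp [h]
    · simp [h, ih, Nat.add_comm]

lemma grd_eq_length (C : List ℕ) (v : ℕ) : grd C v = (grdCoins C v).length :=
  grdAux_eq_length C v v

lemma grdCoins_zero (C : List ℕ) : grdCoins C 0 = [] := rfl

lemma grdCoins_eq (C : List ℕ) {v : ℕ} (hv : v ≠ 0) (hc : coinMax C v ≠ 0) :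
    grdCoins C v = coinMax C v :: grdCoins C (v - coinMax C v) := by
  obtain ⟨n, rfl⟩ : ∃ n, v = n + 1 := ⟨v - 1, by omega⟩
  show grdCoinsAux C (n + 1) (n + 1) = _
  simp only [grdCoinsAux]
  rw [if_neg (by tauto : ¬ (n + 1 = 0 ∨ coinMax C (n+1) = 0))]
  congr 1
  have h1 : 1 ≤ coinMax C (n + 1) := Nat.one_le_iff_ne_zero.2 hc
  have h2 : coinMax C (n + 1) ≤ n + 1 := coinMax_le C (n + 1)
  exact grdCoinsAux_fuel C n (n + 1 - coinMax C (n + 1)) _ (by omega) (by omega)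

lemma coinMax_pos {C : List ℕ} (h1 : (1:ℕ) ∈ C) {v : ℕ} (hv : v ≠ 0) : coinMax C v ≠ 0 := by
  have := le_coinMax h1 (by omega : 1 ≤ v)
  omega

lemma grdCoins_sum {C : List ℕ} (h1 : (1:ℕ) ∈ C) : ∀ v, (grdCoins C v).sum = v := by
  intro v
  induction v using Nat.strong_induction_on with
  | _ v ih =>
    by_cases hv : v = 0
    · subst hv; simp [grdCoins_zero]
    · have hc := coinMax_pos h1 hv
      rw [grdCoins_eq C hv hc]
      have h2 : coinMax C v ≤ v := coinMax_le C v
      have h3 : coinMax C v ≠ 0 := hc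
      rw [List.sum_cons, ih (v - coinMax C v) (by omega)]
      omega

lemma grdCoins_subset {C : List ℕ} : ∀ v, ∀ a ∈ grdCoins C v, a ∈ C ∧ a ≤ coinMax C v := by
  intro v
  induction v using Nat.strong_induction_on with
  | _ v ih =>
    intro a ha
    by_cases hv : v = 0
    · subst hv; rw [grdCoins_zero] at ha; cases ha
    · by_cases hc : coinMax C v = 0
      · unfold grdCoins at ha
        obtain ⟨n, rfl⟩ : ∃ n, v = n + 1 := ⟨v - 1, by omega⟩
        simp [grdCoinsAux, hc] at ha
      · rw [grdCoins_eq C hv hc] at ha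
        rcases List.mem_cons.1 ha with rfl | hm
        · exact ⟨coinMax_mem hc, le_refl _⟩
        · have h2 : coinMax C v ≤ v := coinMax_le C v
          have h3 : coinMax C v ≠ 0 := hc
          obtain ⟨hmem, hle⟩ := ih (v - coinMax C v) (by omega) a hm
          exact ⟨hmem, le_trans hle (coinMax_mono (by omega))⟩

lemma grdCoins_erase {C : List ℕ} (h1 : (1:ℕ) ∈ C) (hpos : ∀ a ∈ C, 0 < a) :
    ∀ v, ∀ c ∈ grdCoins C v, grdCoins C (v - c) = (grdCoins C v).erase c := by
  intro v
  induction v using Nat.strong_induction_on with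
  | _ v ih =>
    intro c hcmem
    by_cases hv : v = 0
    · subst hv; rw [grdCoins_zero] at hcmem; cases hcmem
    · have hd0 : coinMax C v ≠ 0 := coinMax_pos h1 hv
      set d := coinMax C v with hd
      have hdv : d ≤ v := coinMax_le C v
      have heq := grdCoins_eq C hv hd0
      rw [heq] at hcmem
      by_cases hcd : d = c
      · subst hcd
        rw [heq, List.erase_cons_head]
      · have hm : c ∈ grdCoins C (v - d) := by
          rcases List.mem_cons.1 hcmem with h | h
          · exact absurd h.symm hcd
          · exact h
        have hcC : c ∈ C := (grdCoins_subset _ c hm).1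
        have hc0 : 0 < c := hpos c hcC
        have hcsum : c ≤ v - d := by
          have := List.le_sum_of_mem hm
          rwa [grdCoins_sum h1] at this
        -- so d + c ≤ v
        have hdc : d + c ≤ v := by omega
        have hvc0 : v - c ≠ 0 := by omega
        have hcm' : coinMax C (v - c) = d := by
          apply le_antisymm
          · rw [hd]; exact coinMax_mono (by omega)
          · exact le_coinMax (coinMax_mem hd0) (by omega)
        have heq2 := grdCoins_eq C hvc0 (by rw [hcm']; omega)
        rw [hcm'] at heq2
        have hsub : v - c - d = v - d - c := by omega
        rw [heq2, hsub, ih (v - d) (by omega) c hm, heq,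
          List.erase_cons_tail (by simpa using hcd)]

lemma sum_indicator (a : ℕ) : ∀ C : List ℕ,
    (C.map (fun c => if a = c then (1:ℕ) else 0)).sum = C.count a := by
  intro C
  induction C with
  | nil => simp
  | cons c t ih =>
    rw [List.map_cons, List.sum_cons, ih, List.count_cons]
    by_cases h : a = c
    · subst h; simp; omega
    · have h' : ¬ c = a := fun hh => h hh.symm
      simp [h, h']

lemma sum_indicator_mul_zero (a : ℕ) : ∀ C : List ℕ, a ∉ C →
    (C.map (fun c => if a = c then c else 0)).sum = 0 := by
  intro C
  induction C with
  | nil => simp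
  | cons c t ih =>
    intro h
    rw [List.map_cons, List.sum_cons, ih (fun hm => h (List.mem_cons_of_mem _ hm))]
    have : ¬ a = c := fun hc => h (hc ▸ List.mem_cons_self)
    simp [this]

lemma sum_indicator_mul (a : ℕ) : ∀ C : List ℕ, C.Nodup → a ∈ C →
    (C.map (fun c => if a = c then c else 0)).sum = a := by
  intro C
  induction C with
  | nil => intro _ h; cases h
  | cons c t ih =>
    intro hnd hm
    rw [List.map_cons, List.sum_cons]
    rcases List.mem_cons.1 hm with rfl | hm'
    · rw [if_pos rfl, sum_indicator_mul_zero a t (List.nodup_cons.1 hnd).1]; omega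
    · have : ¬ a = c := by
        rintro rfl; exact (List.nodup_cons.1 hnd).1 hm'
      rw [if_neg this, ih (List.nodup_cons.1 hnd).2 hm', Nat.zero_add]

lemma counts_sum {C : List ℕ} (hnd : C.Nodup) :
    ∀ l : List ℕ, (∀ a ∈ l, a ∈ C) → (C.map (fun c => l.count c)).sum = l.length := by
  intro l
  induction l with
  | nil => intro _; simp
  | cons a t ih =>
    intro h
    have ha : a ∈ C := h a (List.mem_cons_self)
    have ht : ∀ b ∈ t, b ∈ C := fun b hb => h b (List.mem_cons_of_mem _ hb)
    have h1 : (C.map (fun c => (a :: t).count c)).sum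
        = (C.map (fun c => t.count c)).sum + (C.map (fun c => if a = c then 1 else 0)).sum := by
      rw [← List.sum_map_add]
      congr 1
      apply List.map_congr_left
      intro c _
      rw [List.count_cons]
      simp
    rw [h1, ih ht, sum_indicator, List.count_eq_one_of_mem hnd ha, List.length_cons]

lemma counts_weighted_sum {C : List ℕ} (hnd : C.Nodup) :
    ∀ l : List ℕ, (∀ a ∈ l, a ∈ C) → (C.map (fun c => l.count c * c)).sum = l.sum := by
  intro l
  induction l with
  | nil => intro _; simp
  | cons a t ih =>
    intro h
    have ha : a ∈ C := h a (List.mem_cons_self)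
    have ht : ∀ b ∈ t, b ∈ C := fun b hb => h b (List.mem_cons_of_mem _ hb)
    have h1 : (C.map (fun c => (a :: t).count c * c)).sum
        = (C.map (fun c => t.count c * c)).sum + (C.map (fun c => if a = c then c else 0)).sum := by
      rw [← List.sum_map_add]
      congr 1
      apply List.map_congr_left
      intro c _
      rw [List.count_cons]
      by_cases hc : a = c
      · subst hc; simp; ring
      · have h' : ¬ c = a := fun hh => hc hh.symm
        simp [hc, h']
    rw [h1, ih ht, sum_indicator_mul a C hnd ha, List.sum_cons]
    omega

lemma decrement : ∀ (C y : List ℕ) (i : ℕ), i < C.length → y.length = C.length →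
    0 < y.getD i 0 →
    ∃ y' : List ℕ, y'.length = C.length ∧
      (List.zipWith (· * ·) y' C).sum + C.getD i 0 = (List.zipWith (· * ·) y C).sum ∧
      y'.sum + 1 = y.sum := by
  intro C y i
  induction i generalizing C y with
  | zero =>
    intro hi hlen hy
    cases C with
    | nil => simp at hi
    | cons c Ct =>
      cases y with
      | nil => simp at hlen
      | cons a yt =>
        simp only [List.getD_cons_zero] at hy ⊢
        refine ⟨(a - 1) :: yt, by simpa using hlen, ?_, by simp; omega⟩
        simp only [List.zipWith_cons_cons, List.sum_cons]
        have h1 : (a - 1) * c + c = a * c := by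
          cases a with
          | zero => omega
          | succ n => simp [Nat.succ_mul]
        omega
  | succ i ih =>
    intro hi hlen hy
    cases C with
    | nil => simp at hi
    | cons c Ct =>
      cases y with
      | nil => simp at hlen
      | cons a yt =>
        simp only [List.getD_cons_succ] at hy ⊢
        obtain ⟨yt', h1, h2, h3⟩ := ih Ct yt (by simpa using hi) (by simpa using hlen) hy
        refine ⟨a :: yt', by simpa using h1, ?_, by simp; omega⟩
        simp only [List.zipWith_cons_cons, List.sum_cons]
        omega

lemma zip_sum_zero : ∀ (x C : List ℕ), x.sum = 0 → (List.zipWith (· * ·) x C).sum = 0 := by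
  intro x
  induction x with
  | nil => intro C _; simp
  | cons a t ih =>
    intro C h
    cases C with
    | nil => simp
    | cons c Ct =>
      simp only [List.sum_cons] at h
      have ha : a = 0 := by omega
      simp only [List.zipWith_cons_cons, List.sum_cons, ha, Nat.zero_mul, Nat.zero_add]
      exact ih Ct (by omega)

lemma grd_mem_reprCosts {C : List ℕ} (h1 : (1:ℕ) ∈ C) (hnd : C.Nodup) (v : ℕ) :
    grd C v ∈ reprCosts C v := by
  refine ⟨C.map (fun c => (grdCoins C v).count c), by simp, ?_, ?_⟩
  · have hz : List.zipWith (· * ·) (C.map (fun c => (grdCoins C v).count c)) C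
        = C.map (fun c => (grdCoins C v).count c * c) := by
      rw [List.zipWith_map_left]; exact List.zipWith_self
    rw [hz, counts_weighted_sum hnd _ (fun a ha => (grdCoins_subset v a ha).1),
      grdCoins_sum h1]
  · rw [counts_sum hnd _ (fun a ha => (grdCoins_subset v a ha).1), ← grd_eq_length]

lemma opt_le_grd {C : List ℕ} (h1 : (1:ℕ) ∈ C) (hnd : C.Nodup) (v : ℕ) :
    opt C v ≤ grd C v := Nat.sInf_le (grd_mem_reprCosts h1 hnd v)

lemma opt_pos {C : List ℕ} (h1 : (1:ℕ) ∈ C) (hnd : C.Nodup) {v : ℕ} (hv : 0 < v) :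
    0 < opt C v := by
  have hne : (reprCosts C v).Nonempty := ⟨grd C v, grd_mem_reprCosts h1 hnd v⟩
  obtain ⟨x, _, hval, hsum⟩ := Nat.sInf_mem hne
  rcases Nat.eq_zero_or_pos (opt C v) with h0 | h
  · exfalso
    rw [opt] at h0
    rw [h0] at hsum
    have := zip_sum_zero x C hsum
    omega
  · exact h

theorem stmt_11 (C : List ℕ) (hchain : List.Chain' (· < ·) C)
    (hhead : C.getD 0 0 = 1) (hnot : ¬ Orderly C)
    (w : ℕ) (hw : w = sInf {v : ℕ | 0 < v ∧ grd C v ≠ opt C v})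
    (y : List ℕ) (hylen : y.length = C.length)
    (hyval : (List.zipWith (· * ·) y C).sum = w)
    (hyopt : y.sum = opt C w) :
    ∀ i : ℕ, i < C.length →
      (grdCoins C w).count (C.getD i 0) * y.getD i 0 = 0 := by
  -- basic facts about C
  have hpw : List.Pairwise (· < ·) C := List.isChain_iff_pairwise.1 hchain
  have hnd : C.Nodup := hpw.imp ne_of_lt
  have h1 : (1:ℕ) ∈ C := by
    cases C with
    | nil => simp at hhead
    | cons a t =>
      simp only [List.getD_cons_zero] at hhead
      exact hhead ▸ List.mem_cons_self
  have hpos : ∀ a ∈ C, 0 < a := by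
    cases C with
    | nil => simp at hhead
    | cons a t =>
      simp only [List.getD_cons_zero] at hhead
      subst hhead
      intro x hx
      rcases List.mem_cons.1 hx with rfl | hx'
      · omega
      · have := (List.pairwise_cons.1 hpw).1 x hx'
        omega
  -- facts about w
  have hSne : {v : ℕ | 0 < v ∧ grd C v ≠ opt C v}.Nonempty := by
    rw [Orderly] at hnot
    push_neg at hnot
    obtain ⟨v, hv, hne⟩ := hnot
    exact ⟨v, hv, hne⟩
  have hwS : 0 < w ∧ grd C w ≠ opt C w := by
    rw [hw]; exact Nat.sInf_mem hSne
  obtain ⟨hw0, hne⟩ := hwS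
  have hmin : ∀ u, 0 < u → u < w → grd C u = opt C u := by
    intro u hu hlt
    by_contra h
    have : sInf {v : ℕ | 0 < v ∧ grd C v ≠ opt C v} ≤ u := Nat.sInf_le ⟨hu, h⟩
    omega
  have hoptlt : opt C w < grd C w :=
    lt_of_le_of_ne (opt_le_grd h1 hnd w) (Ne.symm hne)
  have hoptpos : 0 < opt C w := opt_pos h1 hnd hw0
  intro i hi
  by_contra hcontra
  have hcount : 0 < (grdCoins C w).count (C.getD i 0) := by
    rcases Nat.eq_zero_or_pos ((grdCoins C w).count (C.getD i 0)) with h | h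
    · exact absurd (by rw [h, Nat.zero_mul]) hcontra
    · exact h
  have hyi : 0 < y.getD i 0 := by
    rcases Nat.eq_zero_or_pos (y.getD i 0) with h | h
    · exact absurd (by rw [h, Nat.mul_zero]) hcontra
    · exact h
  set c := C.getD i 0 with hc
  have hcC : c ∈ C := by
    rw [hc, List.getD_eq_getElem _ _ hi]
    exact List.getElem_mem hi
  have hcg : c ∈ grdCoins C w := List.count_pos_iff.1 hcount
  have hcw : c ≤ w := by
    have := List.le_sum_of_mem hcg
    rwa [grdCoins_sum h1] at this
  have hc0 : 0 < c := hpos c hcC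
  rcases eq_or_lt_of_le hcw with hceq | hclt
  · -- c = w : then grd C w = 1, contradiction
    have hcm : coinMax C w = w := by
      have h2 : c ≤ coinMax C w := le_coinMax hcC hcw
      have h3 := coinMax_le C w
      omega
    have : grdCoins C w = [w] := by
      rw [grdCoins_eq C (by omega) (by omega), hcm, Nat.sub_self, grdCoins_zero]
    have hg1 : grd C w = 1 := by rw [grd_eq_length, this]; rfl
    omega
  · -- c < w : build smaller counterexample w - c
    have hgrd' : grd C (w - c) = grd C w - 1 := by
      rw [grd_eq_length, grdCoins_erase h1 hpos w c hcg,
        List.length_erase_of_mem hcg, ← grd_eq_length]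
    obtain ⟨y', hl', hv', hs'⟩ := decrement C y i hi hylen hyi
    have hopt' : opt C (w - c) ≤ y'.sum :=
      Nat.sInf_le ⟨y', hl', by rw [hyval] at hv'; omega, rfl⟩
    have hsy : y'.sum + 1 = opt C w := by rw [← hyopt]; exact hs'
    have heq := hmin (w - c) (by omega) (by omega)
    omega
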